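/- Reflection for formulas of the ω-th-order language of set theory with parameters of third or higher order is inconsistent, as witnessed by the following explicit counterexample: let κ be any nonzero ordinal, let φ(X) be the formula (with one free third-order variable X) asserting that every element of X is a bounded set of ordinals, and let A = {{α : α < β} : β < κ}. Then φ(A) holds in V_κ (every element of A is a set of ordinals bounded strictly below κ), but for every ordinal δ < κ the relativization φ^δ(A^δ) fails, because A^δ = {b ∩ V_δ : b ∈ A} contains the set {α : α < δ} of all ordinals below δ, which is not bounded strictly below δ. -/

import Mathlib

/- STATEMENT 0.

`Vset α` is the collection of sets of rank `< α`, i.e. the level `V_α` of the cumulative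
hierarchy (viewed as a set of `ZFSet`s).  A third-order parameter over `V_κ` is a collection
`A` of subsets of `V_κ`.  The formula `φ(X)` says: every element of `X` is a bounded set of
ordinals (a set of ordinals bounded strictly below the height of the universe).  We take
`A = {{α : α < β} : β < κ}` (where `{α : α < β}` is rendered as the set of von Neumann
ordinals of rank `< β` inside `V_κ`), and show `φ(A)` holds in `V_κ`, while for every
`δ < κ` the relativization `φ^δ(A^δ)` fails, because `A^δ = {b ∩ V_δ : b ∈ A}` contains the
set of all ordinals below `δ`, which is not bounded strictly below `δ`. -/

/-- The `α`-th level of the cumulative hierarchy, as a collection of `ZFSet`s. -/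
def Vset (α : Ordinal) : Set ZFSet := {x | x.rank < α}

/-- The set (as a subcollection of `V_κ`) of all von Neumann ordinals of rank `< β`,
i.e. the rendering of `{α : α < β}`. -/
def ordsBelow (β : Ordinal) : Set ZFSet := {x | x.IsOrdinal ∧ x.rank < β}

/-- The third-order parameter `A = {{α : α < β} : β < κ}`. -/
def thirdOrderA (κ : Ordinal) : Set (Set ZFSet) := {b | ∃ β < κ, b = ordsBelow β}

/-- `b` is a set of ordinals bounded strictly below `γ`: there is `δ < γ` such that every
element of `b` is an ordinal smaller than `δ`. -/
def BoundedSetOfOrds (γ : Ordinal) (b : Set ZFSet) : Prop :=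
  (∀ x ∈ b, x.IsOrdinal) ∧ ∃ δ < γ, ∀ x ∈ b, x.rank < δ

/-- `φ^γ(X)`: every element of `X` is a set of ordinals bounded strictly below `γ`
(the relativization of `φ` to `V_γ`; at `γ = κ` this is `φ` itself over `V_κ`). -/
def PhiAt (γ : Ordinal) (X : Set (Set ZFSet)) : Prop :=
  ∀ b ∈ X, BoundedSetOfOrds γ b

/-- The relativization `X^δ = {b ∩ V_δ : b ∈ X}` of a third-order parameter. -/
def relThird (X : Set (Set ZFSet)) (δ : Ordinal) : Set (Set ZFSet) :=
  (fun b => b ∩ Vset δ) '' X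


open Ordinal in
noncomputable def vN (o : Ordinal.{u}) : ZFSet.{u} :=
  ZFSet.range (fun i : o.ToType => vN ((Ordinal.ToType.mk (o := o)).symm i).1)
termination_by o
decreasing_by exact ((Ordinal.ToType.mk (o := o)).symm i).2

theorem mem_vN {y : ZFSet} {o : Ordinal} : y ∈ vN o ↔ ∃ p < o, y = vN p := by
  rw [vN, ZFSet.mem_range]
  constructor
  · rintro ⟨i, rfl⟩
    exact ⟨_, ((Ordinal.ToType.mk (o := o)).symm i).2, rfl⟩
  · rintro ⟨p, hp, rfl⟩
    refine ⟨Ordinal.ToType.mk (o := o) ⟨p, hp⟩, ?_⟩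
    simp

theorem vN_mem {p o : Ordinal} (h : p < o) : vN p ∈ vN o := mem_vN.2 ⟨p, h, rfl⟩

theorem rank_vN (o : Ordinal) : (vN o).rank = o := by
  induction o using Ordinal.induction with
  | h o IH =>
    apply le_antisymm
    · rw [ZFSet.rank_le_iff]
      intro y hy
      obtain ⟨p, hp, rfl⟩ := mem_vN.1 hy
      rw [IH p hp]; exact hp
    · refine le_of_forall_lt fun p hp => ?_
      calc p = (vN p).rank := (IH p hp).symm
        _ < (vN o).rank := ZFSet.rank_lt_of_mem (vN_mem hp)

theorem isOrdinal_vN (o : Ordinal) : (vN o).IsOrdinal := by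
  constructor
  · intro y hy z hz
    obtain ⟨p, hp, rfl⟩ := mem_vN.1 hy
    obtain ⟨q, hq, rfl⟩ := mem_vN.1 hz
    exact vN_mem (hq.trans hp)
  · intro y z w hyz hzw hw
    obtain ⟨p, hp, rfl⟩ := mem_vN.1 hw
    obtain ⟨q, hq, rfl⟩ := mem_vN.1 hzw
    obtain ⟨r, hr, rfl⟩ := mem_vN.1 hyz
    exact vN_mem (hr.trans hq)

/-- Reflection with third-order parameters is inconsistent, via the explicit
counterexample: `φ(A)` holds in `V_κ`, but for every `δ < κ` the relativization
`φ^δ(A^δ)` fails, since `A^δ` contains the set of all ordinals below `δ`, which is not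
bounded strictly below `δ`. -/
theorem statement0 (κ : Ordinal) (hκ : κ ≠ 0) :
    PhiAt κ (thirdOrderA κ) ∧
    ∀ δ < κ,
      ordsBelow δ ∈ relThird (thirdOrderA κ) δ ∧
      ¬ (∃ γ' < δ, ∀ x ∈ ordsBelow δ, x.rank < γ') ∧
      ¬ PhiAt δ (relThird (thirdOrderA κ) δ) := by
  have hords : ∀ δ, ordsBelow δ ∩ Vset δ = ordsBelow δ := by
    intro δ
    ext x
    simp only [ordsBelow, Vset, Set.mem_inter_iff, Set.mem_setOf_eq, and_iff_left_iff_imp]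
    exact fun h => h.2
  refine ⟨?_, fun δ hδ => ?_⟩
  · rintro b ⟨β, hβ, rfl⟩
    exact ⟨fun x hx => hx.1, β, hβ, fun x hx => hx.2⟩
  · have hmem : ordsBelow δ ∈ relThird (thirdOrderA κ) δ :=
      ⟨ordsBelow δ, ⟨δ, hδ, rfl⟩, hords δ⟩
    have hunb : ¬ (∃ γ' < δ, ∀ x ∈ ordsBelow δ, x.rank < γ') := by
      rintro ⟨γ', hγ', h⟩
      have : (vN γ').rank < γ' := h _ ⟨isOrdinal_vN γ', by rw [rank_vN]; exact hγ'⟩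
      rw [rank_vN] at this
      exact lt_irrefl _ this
    exact ⟨hmem, hunb, fun hphi => hunb (hphi _ hmem).2⟩
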